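/- For all integers N, β ≥ 1 and every integer r with 1 ≤ r ≤ min(N, β), there exist matrices A, B ∈ ℂ^{N×β} with rk(AA*) = rk(BB*) = r and a vector u ∈ ℂ^N such that u*(AA* ⋄ BB*)u = (1/r)·|ρ* u|² and this common value is nonzero, where ρ ∈ ℂ^N has entries ρ_k := Σ_{i=1}^{k} (BA^T)_{i, k−i+1}. In particular, the coefficient 1/min(rk AA*, rk BB*) in the lower bound AA* ⋄ BB* ≽ (1/min(rk AA*, rk BB*)) ρ ρ* cannot be replaced by any larger constant uniformly over all A, B. -/

import Mathlib

open Matrix ComplexOrder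

/-- The matrix convolution (Jury product), 0-based indices. -/
noncomputable def matConv {N : ℕ} (A B : Matrix (Fin N) (Fin N) ℂ) :
    Matrix (Fin N) (Fin N) ℂ :=
  Matrix.of fun i j => ∑ k : Fin N, ∑ l : Fin N,
    if k.1 ≤ i.1 ∧ l.1 ≤ j.1 then A k l * B (i - k) (j - l) else 0

section aux
variable {N β r : ℕ}

lemma aux_card_sum (hrN : r ≤ N) :
    ∑ k : Fin N, (if k.1 < r then (1:ℂ) else 0) = r := by
  rw [Finset.sum_boole]
  norm_cast
  have : Finset.filter (fun k : Fin N => k.1 < r) Finset.univ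
      = Finset.map (Fin.castLEEmb hrN) Finset.univ := by
    ext k
    simp only [Finset.mem_filter, Finset.mem_univ, true_and, Finset.mem_map,
      Fin.castLEEmb_apply]
    constructor
    · intro h; exact ⟨⟨k.1, h⟩, rfl⟩
    · rintro ⟨j, rfl⟩; exact j.2

  rw [this, Finset.card_map, Finset.card_univ, Fintype.card_fin]

lemma aux_rank (hr : 1 ≤ r) (hrN : r ≤ N) :
    (Matrix.diagonal (fun i : Fin N => if i.1 < r then (1:ℂ) else 0)).rank = r := by
  rw [Matrix.rank_diagonal]
  have hiff : ∀ i : Fin N, ((if i.1 < r then (1:ℂ) else 0) ≠ 0) ↔ i.1 < r := by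
    intro i; split_ifs with h <;> simp [h]
  refine (Fintype.card_congr ?_).trans (Fintype.card_fin r)
  exact
    { toFun := fun s => ⟨s.1.1, (hiff s.1).mp s.2⟩
      invFun := fun j => ⟨⟨j.1, lt_of_lt_of_le j.2 hrN⟩, (hiff _).mpr j.2⟩
      left_inv := fun s => by ext; rfl
      right_inv := fun j => by ext; rfl }

-- the key quadratic form computation
lemma aux_main (hr : 1 ≤ r) (hrN : r ≤ N)
    (idx : Fin N) (hidx : idx.1 = r - 1) :
    matConv (Matrix.diagonal (fun i : Fin N => if i.1 < r then (1:ℂ) else 0))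
      (Matrix.diagonal (fun i : Fin N => if i.1 < r then (1:ℂ) else 0)) idx idx = r := by
  set w : Fin N → ℂ := fun i => if i.1 < r then (1:ℂ) else 0 with hw
  show (∑ k : Fin N, ∑ l : Fin N, if k.1 ≤ idx.1 ∧ l.1 ≤ idx.1 then
      Matrix.diagonal w k l * Matrix.diagonal w (idx - k) (idx - l) else 0) = r
  rw [← aux_card_sum hrN]
  apply Finset.sum_congr rfl
  intro k _
  by_cases hk : k.1 < r
  · rw [if_pos hk]
    have hkle : k ≤ idx := by rw [Fin.le_def]; omega
    rw [Finset.sum_eq_single k]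
    · rw [if_pos ⟨by omega, by omega⟩]
      have h1 : Matrix.diagonal w k k = 1 := by
        rw [Matrix.diagonal_apply_eq, hw]; simp [hk]
      have h2 : Matrix.diagonal w (idx - k) (idx - k) = 1 := by
        rw [Matrix.diagonal_apply_eq, hw]
        have := Fin.sub_val_of_le hkle
        simp only []
        rw [if_pos (by omega)]
      rw [h1, h2, one_mul]
    · intro l _ hl
      split_ifs with hc
      · rw [Matrix.diagonal_apply_ne' _ hl, zero_mul]
      · rfl
    · simp
  · rw [if_neg hk]
    apply Finset.sum_eq_zero
    intro l _
    rw [if_neg]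
    omega
end aux

/-- sharpness of the constant `1/min(rk AA*, rk BB*)` in the
matrix-convolution lower bound. -/
theorem matConv_lower_bound_sharp (N β r : ℕ) (hN : 1 ≤ N) (hβ : 1 ≤ β)
    (hr : 1 ≤ r) (hrm : r ≤ min N β) :
    ∃ (A B : Matrix (Fin N) (Fin β) ℂ) (u : Fin N → ℂ),
      (A * Aᴴ).rank = r ∧ (B * Bᴴ).rank = r ∧
      star u ⬝ᵥ (matConv (A * Aᴴ) (B * Bᴴ)).mulVec u
        = ((r : ℂ))⁻¹ *
            ((‖(star fun k : Fin N =>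
                  ∑ i : Fin N, if i.1 ≤ k.1 then (B * Aᵀ) i (k - i) else 0) ⬝ᵥ u‖ ^ 2 : ℝ) : ℂ) ∧
      star u ⬝ᵥ (matConv (A * Aᴴ) (B * Bᴴ)).mulVec u ≠ 0 := by
  have hrN : r ≤ N := le_trans hrm (min_le_left _ _)
  have hrβ : r ≤ β := le_trans hrm (min_le_right _ _)
  set A : Matrix (Fin N) (Fin β) ℂ :=
    Matrix.of fun i s => if (i.1 = s.1 ∧ i.1 < r) then 1 else 0 with hA
  set B : Matrix (Fin N) (Fin β) ℂ :=
    Matrix.of fun i t => if i.1 + t.1 + 1 = r then 1 else 0 with hB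
  have hAA : A * Aᴴ = Matrix.diagonal (fun i : Fin N => if i.1 < r then (1:ℂ) else 0) := by
    ext i j
    simp only [mul_apply, conjTranspose_apply, hA, of_apply, diagonal_apply,
      apply_ite (star : ℂ → ℂ), star_one, star_zero, ite_mul, one_mul, zero_mul,
      mul_ite, mul_one, mul_zero]
    by_cases hij : i = j
    · subst hij
      by_cases hi : i.1 < r
      · rw [Finset.sum_eq_single (⟨i.1, lt_of_lt_of_le hi hrβ⟩ : Fin β)]
        · simp [hi]
        · intro s _ hs
          rw [if_neg]
          rintro ⟨h1, -⟩; exact hs (by ext; simp [← h1])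
        · simp
      · simp [hi]
    · rw [if_neg hij]
      apply Finset.sum_eq_zero
      intro s _
      split_ifs with h1 h2
      · exfalso; apply hij; ext; omega
      · rfl
      · rfl
  have hBB : B * Bᴴ = Matrix.diagonal (fun i : Fin N => if i.1 < r then (1:ℂ) else 0) := by
    ext i j
    simp only [mul_apply, conjTranspose_apply, hB, of_apply, diagonal_apply,
      apply_ite (star : ℂ → ℂ), star_one, star_zero, ite_mul, one_mul, zero_mul,
      mul_ite, mul_one, mul_zero]
    by_cases hij : i = j
    · subst hij
      by_cases hi : i.1 < r
      · have ht : r - 1 - i.1 < β := lt_of_lt_of_le (by omega) hrβ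
        rw [Finset.sum_eq_single (⟨r - 1 - i.1, ht⟩ : Fin β)]
        · rw [if_pos (by simp; omega), if_pos (by simp; omega)]
          simp [hi]
        · intro s _ hs
          rw [if_neg]
          intro hc; exact hs (Fin.ext (by simp; omega))
        · simp
      · simp only [if_true, if_neg hi]
        apply Finset.sum_eq_zero
        intro s _
        rw [if_neg]; omega
    · rw [if_neg hij]
      apply Finset.sum_eq_zero
      intro s _
      split_ifs with h1 h2
      · exfalso; apply hij; ext; omega
      · rfl
      · rfl
  have hBA : B * Aᵀ = Matrix.of fun (i m : Fin N) => if i.1 + m.1 + 1 = r then (1:ℂ) else 0 := by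
    ext i m
    simp only [mul_apply, transpose_apply, hA, hB, of_apply, ite_mul, one_mul, zero_mul,
      mul_ite, mul_one, mul_zero]
    by_cases him : i.1 + m.1 + 1 = r
    · have hm : m.1 < β := lt_of_lt_of_le (by omega) hrβ
      rw [if_pos him, Finset.sum_eq_single (⟨m.1, hm⟩ : Fin β)]
      · rw [if_pos (by simp; omega), if_pos (by simp; omega)]
      · intro s _ hs
        split_ifs with h1 h2
        · exfalso; exact hs (Fin.ext (by simp; omega))
        · rfl
        · rfl
      · simp
    · rw [if_neg him]
      apply Finset.sum_eq_zero
      intro s _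
      split_ifs with h1 h2
      · exfalso; omega
      · rfl
      · rfl
  set D : Matrix (Fin N) (Fin N) ℂ :=
    Matrix.diagonal (fun i : Fin N => if i.1 < r then (1:ℂ) else 0) with hD
  set idx : Fin N := ⟨r - 1, by omega⟩ with hidx
  set u : Fin N → ℂ := fun k => if k = idx then 1 else 0 with hu
  have hLHS : star u ⬝ᵥ (matConv (A * Aᴴ) (B * Bᴴ)).mulVec u = r := by
    rw [hAA, hBB]
    have : (matConv D D).mulVec u = fun k => (matConv D D) k idx := by
      funext k
      simp only [mulVec, dotProduct, hu, mul_ite, mul_one, mul_zero]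
      rw [Finset.sum_ite_eq' Finset.univ idx]
      simp
    rw [this]
    simp only [dotProduct, hu, Pi.star_apply, apply_ite (star : ℂ → ℂ), star_one, star_zero,
      ite_mul, one_mul, zero_mul]
    rw [Finset.sum_ite_eq' Finset.univ idx]
    simp only [Finset.mem_univ, if_true]
    exact aux_main hr hrN idx rfl
  have hrho : (star fun k : Fin N =>
      ∑ i : Fin N, if i.1 ≤ k.1 then (B * Aᵀ) i (k - i) else 0) ⬝ᵥ u = r := by
    simp only [dotProduct, Pi.star_apply, hu, mul_ite, mul_one, mul_zero]
    rw [Finset.sum_ite_eq' Finset.univ idx]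
    simp only [Finset.mem_univ, if_true]
    rw [hBA]
    have : (∑ i : Fin N, if i.1 ≤ idx.1 then
        (Matrix.of fun (i m : Fin N) => if i.1 + m.1 + 1 = r then (1:ℂ) else 0) i (idx - i) else 0)
        = ∑ i : Fin N, (if i.1 < r then (1:ℂ) else 0) := by
      apply Finset.sum_congr rfl
      intro i _
      by_cases hi : i.1 < r
      · have hile : i ≤ idx := by rw [Fin.le_def]; show i.1 ≤ r - 1; omega
        have hsub : (idx - i).1 = idx.1 - i.1 := Fin.sub_val_of_le hile
        have hidx1 : idx.1 = r - 1 := rfl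
        rw [if_pos (show i.1 ≤ idx.1 by omega), if_pos hi, of_apply, if_pos (by omega)]
      · rw [if_neg (by show ¬ i.1 ≤ r - 1; omega), if_neg hi]
    rw [this, aux_card_sum hrN]
    simp
  refine ⟨A, B, u, ?_, ?_, ?_, ?_⟩
  · rw [hAA]; exact aux_rank hr hrN
  · rw [hBB]; exact aux_rank hr hrN
  · rw [hLHS, hrho]
    have hr0 : (r:ℝ) ≠ 0 := by positivity
    rw [Complex.norm_natCast]
    push_cast
    field_simp
  · rw [hLHS]
    exact_mod_cast (by omega : r ≠ 0)
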